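/- If there exists a finite set A of positive natural numbers with sum-free subset constant δ, then for every n there exists a finite set B of positive natural numbers with |B| ≥ n and sum-free subset constant at most δ. -/

import Mathlib

def SumFree (S : Finset ℕ) : Prop := ∀ x ∈ S, ∀ y ∈ S, ∀ z ∈ S, x + y ≠ z

theorem arbitrarily_large_sets (A : Finset ℕ) (hA : ∀ a ∈ A, 0 < a)
    (hne : A.Nonempty)
    (l : ℕ) (hl : IsGreatest {n : ℕ | ∃ S ⊆ A, SumFree S ∧ S.card = n} l)
    (n : ℕ) :
    ∃ B : Finset ℕ, (∀ b ∈ B, 0 < b) ∧ n ≤ B.card ∧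
      ∃ m : ℕ, IsGreatest {k : ℕ | ∃ S ⊆ B, SumFree S ∧ S.card = k} m ∧
        (m : ℚ) / (B.card : ℚ) ≤ (l : ℚ) / (A.card : ℚ) := by
  classical
  set k := max n 1 with hk
  have hk1 : 1 ≤ k := le_max_right n 1
  set M := A.max' hne + 1 with hMdef
  have hMpos : 0 < M := Nat.succ_pos _
  have haM : ∀ a ∈ A, a < M := fun a ha => Nat.lt_succ_of_le (A.le_max' a ha)
  -- step: strict growth between levels
  have step : ∀ i j a b, i < j → a ∈ A → b ∈ A → M ^ i * a < M ^ j * b := by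
    intro i j a b hij ha hb
    calc M ^ i * a < M ^ i * M := by
          exact mul_lt_mul_of_pos_left (haM a ha) (pow_pos hMpos i)
      _ = M ^ (i + 1) := (pow_succ M i).symm
      _ ≤ M ^ j := Nat.pow_le_pow_right hMpos hij
      _ ≤ M ^ j * b := Nat.le_mul_of_pos_right _ (hA b hb)
  have key : ∀ i j a b, a ∈ A → b ∈ A → M ^ i * a = M ^ j * b → i = j ∧ a = b := by
    intro i j a b ha hb h
    rcases lt_trichotomy i j with hij | hij | hij
    · exact absurd h (Nat.ne_of_lt (step i j a b hij ha hb))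
    · subst hij
      exact ⟨rfl, Nat.eq_of_mul_eq_mul_left (pow_pos hMpos i) h⟩
    · exact absurd h.symm (Nat.ne_of_lt (step j i b a hij hb ha))
  set B : Finset ℕ := (Finset.range k).biUnion (fun i => A.image (fun a => M ^ i * a)) with hB
  have hBpos : ∀ b ∈ B, 0 < b := by
    intro b hb
    simp only [hB, Finset.mem_biUnion, Finset.mem_image, Finset.mem_range] at hb
    obtain ⟨i, _, a, ha, rfl⟩ := hb
    exact Nat.mul_pos (pow_pos hMpos i) (hA a ha)
  have hcardim : ∀ i, (A.image (fun a => M ^ i * a)).card = A.card := by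
    intro i
    apply Finset.card_image_of_injective
    intro a b h
    exact Nat.eq_of_mul_eq_mul_left (pow_pos hMpos i) h
  have hBcard : B.card = k * A.card := by
    rw [hB, Finset.card_biUnion]
    · rw [Finset.sum_congr rfl fun i _ => hcardim i, Finset.sum_const, Finset.card_range,
        smul_eq_mul]
    · intro i _ j _ hij
      rw [Function.onFun, Finset.disjoint_left]
      intro x hx hx'
      simp only [Finset.mem_image] at hx hx'
      obtain ⟨a, ha, rfl⟩ := hx
      obtain ⟨b, hb, hab⟩ := hx'
      exact hij ((key i j a b ha hb hab.symm).1)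
  have hApos : 0 < A.card := Finset.card_pos.mpr hne
  have hncard : n ≤ B.card := by
    rw [hBcard]
    calc n ≤ k := le_max_left n 1
      _ = k * 1 := (mul_one k).symm
      _ ≤ k * A.card := Nat.mul_le_mul_left k hApos
  -- the set of cardinalities of sum-free subsets of B
  set T : Set ℕ := {x : ℕ | ∃ S ⊆ B, SumFree S ∧ S.card = x} with hT
  have hTne : T.Nonempty := ⟨0, ∅, Finset.empty_subset _, by intro x hx; simp at hx, Finset.card_empty⟩
  have hTbdd : BddAbove T := by
    refine ⟨B.card, ?_⟩
    rintro x ⟨S, hS, _, rfl⟩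
    exact Finset.card_le_card hS
  obtain ⟨m, hm⟩ : ∃ m, m = sSup T := ⟨_, rfl⟩
  refine ⟨B, hBpos, hncard, m, hm ▸ ⟨Nat.sSup_mem hTne hTbdd, fun x hx => le_csSup hTbdd hx⟩, ?_⟩
  -- bound: sSup T ≤ k * l
  have hml : m ≤ k * l := by
    rw [hm]
    obtain ⟨S, hSB, hSf, hSc⟩ := Nat.sSup_mem hTne hTbdd
    rw [← hSc]
    have hsub : S ⊆ (Finset.range k).biUnion (fun i => S ∩ A.image (fun a => M ^ i * a)) := by
      intro x hx
      have := hSB hx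
      simp only [hB, Finset.mem_biUnion] at this ⊢
      obtain ⟨i, hi, hxi⟩ := this
      exact ⟨i, hi, Finset.mem_inter.mpr ⟨hx, hxi⟩⟩
    calc S.card ≤ ((Finset.range k).biUnion (fun i => S ∩ A.image (fun a => M ^ i * a))).card :=
          Finset.card_le_card hsub
      _ ≤ ∑ i ∈ Finset.range k, (S ∩ A.image (fun a => M ^ i * a)).card :=
          Finset.card_biUnion_le
      _ ≤ ∑ _i ∈ Finset.range k, l := by
          apply Finset.sum_le_sum
          intro i _
          set T' : Finset ℕ := A.filter (fun a => M ^ i * a ∈ S) with hT'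
          have himg : T'.image (fun a => M ^ i * a) = S ∩ A.image (fun a => M ^ i * a) := by
            ext x
            simp only [hT', Finset.mem_image, Finset.mem_filter, Finset.mem_inter]
            constructor
            · rintro ⟨a, ⟨ha, haS⟩, rfl⟩
              exact ⟨haS, a, ha, rfl⟩
            · rintro ⟨hxS, a, ha, rfl⟩
              exact ⟨a, ⟨ha, hxS⟩, rfl⟩
          have hcard : (S ∩ A.image (fun a => M ^ i * a)).card = T'.card := by
            rw [← himg]
            apply Finset.card_image_of_injective
            intro a b h
            exact Nat.eq_of_mul_eq_mul_left (pow_pos hMpos i) h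
          rw [hcard]
          apply hl.2
          refine ⟨T', Finset.filter_subset _ _, ?_, rfl⟩
          intro x hx y hy z hz hxyz
          simp only [hT', Finset.mem_filter] at hx hy hz
          have : M ^ i * x + M ^ i * y = M ^ i * z := by
            rw [← Nat.mul_add, hxyz]
          exact hSf _ hx.2 _ hy.2 _ hz.2 this
      _ = k * l := by simp [Finset.sum_const, Finset.card_range, mul_comm]
  -- final rational inequality
  rw [hBcard]
  have hkpos : (0:ℚ) < (k : ℚ) := by exact_mod_cast hk1
  have hApos' : (0:ℚ) < (A.card : ℚ) := by exact_mod_cast hApos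
  have h1 : (m : ℚ) ≤ (k : ℚ) * l := by exact_mod_cast hml
  have h2 : ((k * A.card : ℕ) : ℚ) = (k : ℚ) * A.card := by push_cast; ring
  rw [h2]
  have hd : (0:ℚ) < (k : ℚ) * (A.card : ℚ) := mul_pos hkpos hApos'
  rw [div_le_div_iff₀ hd hApos']
  calc (m : ℚ) * (A.card : ℚ) ≤ ((k : ℚ) * (l : ℚ)) * (A.card : ℚ) :=
        mul_le_mul_of_nonneg_right h1 (le_of_lt hApos')
    _ = (l : ℚ) * ((k : ℚ) * (A.card : ℚ)) := by ring
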